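/- Let f : Q → Q be a Lattès map with lift f̃ : 𝕋² → 𝕋², a covering map each of whose fibers has exactly d elements, with d > 1. Then the critical points of f are not periodic: if q ∈ Q is a critical point of f (f is injective on no neighborhood of q), then for every integer n ≥ 1, fⁿ(q) ≠ q. -/
import Mathlib


/-- The 2-torus `𝕋² = (ℝ/ℤ) × (ℝ/ℤ)`. -/
abbrev Torus : Type := UnitAddCircle × UnitAddCircle

/-- The equivalence relation `x ∼ -x` on the torus. -/
def negSetoid : Setoid Torus where
  r x y := x = y ∨ x = -y
  iseqv := by
    refine ⟨fun x => Or.inl rfl, fun {x y} h => ?_, fun {x y z} h1 h2 => ?_⟩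
    · rcases h with h | h
      · exact Or.inl h.symm
      · right; rw [h, neg_neg]
    · rcases h1 with h1 | h1 <;> rcases h2 with h2 | h2 <;>
        simp only [h1, h2, neg_neg] <;> tauto

/-- The quotient `Q` of the torus by `x ∼ -x` (topologically a sphere). -/
abbrev Q : Type := Quotient negSetoid

/-- The quotient (branched covering) map `π : 𝕋² → Q`. -/
def piQ : Torus → Q := Quotient.mk negSetoid

/-- The set of 2-torsion points of the torus (the four branch points of `π`,
whose images under `π` are the critical values of `π`). -/
def torsion2 : Set Torus := {z : Torus | z + z = 0}

lemma piQ_eq_iff {x y : Torus} : piQ x = piQ y ↔ x = y ∨ x = -y := by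
  unfold piQ
  rw [Quotient.eq]
  exact Iff.rfl

lemma piQ_neg (x : Torus) : piQ (-x) = piQ x := piQ_eq_iff.mpr (Or.inr rfl)

lemma continuous_piQ : Continuous piQ := continuous_quotient_mk'

lemma mem_torsion2 {z : Torus} : z ∈ torsion2 ↔ z = -z := by
  rw [torsion2, Set.mem_setOf_eq, ← add_eq_zero_iff_eq_neg]

lemma neg_mem_torsion2 {z : Torus} (h : z ∈ torsion2) : -z ∈ torsion2 := by
  rw [mem_torsion2] at h ⊢
  rw [neg_neg, ← h]

-- surjectivity of piQ / existence of representative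
lemma piQ_surj (q : Q) : ∃ z, piQ z = q := Quotient.exists_rep q

-- quotient map openness
lemma isOpen_piQ_image {V : Set Torus} (hV : IsOpen V) : IsOpen (piQ '' V) := by
  have hpre : piQ ⁻¹' (piQ '' V) = V ∪ (fun x : Torus => -x) ⁻¹' V := by
    ext w
    constructor
    · rintro ⟨v, hv, hvw⟩
      rcases piQ_eq_iff.mp hvw.symm with h | h
      · left; rwa [← h] at hv
      · right; show -w ∈ V
        have : v = -w := by rw [h, neg_neg]
        rwa [← this]
    · rintro (hw | hw)
      · exact ⟨w, hw, rfl⟩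
      · exact ⟨-w, hw, piQ_neg w⟩
  letI := negSetoid
  have hq := isQuotientMap_quotient_mk' (s := negSetoid)
  have : IsOpen (Quotient.mk' ⁻¹' (piQ '' V)) := by
    show IsOpen (piQ ⁻¹' (piQ '' V))
    rw [hpre]
    exact hV.union (hV.preimage continuous_neg)
  exact hq.isOpen_preimage.mp this

lemma circle2torsion_finite : {a : UnitAddCircle | a + a = 0}.Finite := by
  apply Set.Finite.subset (Set.Finite.insert ((0:ℝ) : UnitAddCircle) (Set.finite_singleton (((1:ℝ)/2 : ℝ) : UnitAddCircle)))
  intro a ha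
  induction a using QuotientAddGroup.induction_on with
  | H r =>
    simp only [Set.mem_setOf_eq] at ha
    rw [← AddCircle.coe_add, AddCircle.coe_eq_zero_iff] at ha
    obtain ⟨n, hn⟩ := ha
    rw [zsmul_eq_mul, mul_one] at hn
    have hr : r = (n : ℝ)/2 := by linarith
    rw [Set.mem_insert_iff, Set.mem_singleton_iff]
    rcases Int.even_or_odd n with ⟨k, hk⟩ | ⟨k, hk⟩
    · left
      have : ((r : ℝ) : UnitAddCircle) - ((0:ℝ) : UnitAddCircle) = 0 := by
        rw [← AddCircle.coe_sub, AddCircle.coe_eq_zero_iff]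
        exact ⟨k, by rw [zsmul_eq_mul, mul_one, hr, hk]; push_cast; ring⟩
      rwa [sub_eq_zero] at this
    · right
      have : ((r : ℝ) : UnitAddCircle) - (((1:ℝ)/2 : ℝ) : UnitAddCircle) = 0 := by
        rw [← AddCircle.coe_sub, AddCircle.coe_eq_zero_iff]
        exact ⟨k, by rw [zsmul_eq_mul, mul_one, hr, hk]; push_cast; ring⟩
      rw [sub_eq_zero] at this
      simpa using this

lemma torsion2_finite : torsion2.Finite := by
  apply Set.Finite.subset (circle2torsion_finite.prod circle2torsion_finite)
  intro z hz
  have h1 : z.1 + z.1 = 0 := congrArg Prod.fst hz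
  have h2 : z.2 + z.2 = 0 := congrArg Prod.snd hz
  exact ⟨h1, h2⟩

lemma nonempty_diff_torsion {V : Set Torus} (hV : IsOpen V) {t : Torus} (ht : t ∈ V) :
    (V \ torsion2).Nonempty := by
  set c : ℝ → Torus := fun r => t + (((r : ℝ) : UnitAddCircle), (0 : UnitAddCircle)) with hc
  have hc1 : Continuous (fun r : ℝ => ((r : ℝ) : UnitAddCircle)) := AddCircle.continuous_mk' 1
  have hcont : Continuous c := continuous_const.add (hc1.prodMk continuous_const)
  have h0 : c 0 = t := by simp [hc]
  have hmem : c ⁻¹' V ∈ nhds (0:ℝ) :=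
    hcont.continuousAt.preimage_mem_nhds (by rw [h0]; exact hV.mem_nhds ht)
  obtain ⟨ε, hε, hball⟩ := Metric.mem_nhds_iff.mp hmem
  have hme : (0:ℝ) < min ε 1 := lt_min hε one_pos
  have hinj : Set.InjOn c (Set.Ioo 0 (min ε 1)) := by
    intro r hr s hs hrs
    have h1 : t.1 + (r : UnitAddCircle) = t.1 + (s : UnitAddCircle) := congrArg Prod.fst hrs
    have h2 : ((r : ℝ) : UnitAddCircle) = ((s : ℝ) : UnitAddCircle) := add_left_cancel h1
    have hrI : r ∈ Set.Ico (0:ℝ) (0 + 1) := Set.mem_Ico.mpr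
      ⟨hr.1.le, by rw [zero_add]; exact lt_of_lt_of_le hr.2 (min_le_right _ _)⟩
    have hsI : s ∈ Set.Ico (0:ℝ) (0 + 1) := Set.mem_Ico.mpr
      ⟨hs.1.le, by rw [zero_add]; exact lt_of_lt_of_le hs.2 (min_le_right _ _)⟩
    exact (AddCircle.coe_eq_coe_iff_of_mem_Ico hrI hsI).mp h2
  have hIooV : Set.Ioo (0:ℝ) (min ε 1) ⊆ c ⁻¹' V := by
    intro r hr
    apply hball
    rw [Metric.mem_ball, Real.dist_eq, sub_zero, abs_of_pos hr.1]
    exact lt_of_lt_of_le hr.2 (min_le_left _ _)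
  have hSinf : (c '' Set.Ioo (0:ℝ) (min ε 1)).Infinite :=
    (Set.Ioo_infinite hme).image hinj
  obtain ⟨w, hw⟩ := (hSinf.diff torsion2_finite).nonempty
  refine ⟨w, ?_, hw.2⟩
  obtain ⟨r, hr, hrw⟩ := hw.1
  rw [← hrw]
  exact hIooV hr

lemma mem_closure_diff_torsion {V : Set Torus} (hV : IsOpen V) {t : Torus} (ht : t ∈ V) :
    t ∈ closure (V \ torsion2) := by
  rw [mem_closure_iff]
  intro O hO htO
  obtain ⟨w, hw⟩ := nonempty_diff_torsion (hO.inter hV) (Set.mem_inter htO ht)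
  exact ⟨w, hw.1.1, hw.1.2, hw.2⟩

lemma exists_injOn_nhd {ftilde : Torus → Torus} (hcov : IsCoveringMap ftilde) (z : Torus) :
    ∃ V : Set Torus, IsOpen V ∧ z ∈ V ∧ Set.InjOn ftilde V := by
  obtain ⟨e, hz, he⟩ := hcov.isLocalHomeomorph z
  exact ⟨e.source, e.open_source, hz,
    fun a ha b hb hab => e.injOn ha hb (by rw [he] at hab; exact hab)⟩

section main
variable {f : Q → Q} {ftilde : Torus → Torus}

lemma ftilde_pm (hsemi : ∀ z, piQ (ftilde z) = f (piQ z)) (w : Torus) :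
    ftilde (-w) = ftilde w ∨ ftilde (-w) = -ftilde w := by
  have : piQ (ftilde (-w)) = piQ (ftilde w) := by rw [hsemi, hsemi, piQ_neg]
  exact piQ_eq_iff.mp this

lemma ftilde_torsion (hcov : IsCoveringMap ftilde)
    (hsemi : ∀ z, piQ (ftilde z) = f (piQ z))
    {t : Torus} (ht : t ∈ torsion2) : ftilde t ∈ torsion2 := by
  obtain ⟨V0, hV0, htV0, hinj⟩ := exists_injOn_nhd hcov t
  set V := V0 ∩ (fun x : Torus => -x) ⁻¹' V0 with hVdef
  have hVopen : IsOpen V := hV0.inter (hV0.preimage continuous_neg)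
  have htV : t ∈ V := ⟨htV0, show -t ∈ V0 by rw [← mem_torsion2.mp ht]; exact htV0⟩
  have hg : Set.EqOn (fun w => ftilde (-w) + ftilde w) (fun _ => (0 : Torus)) (V \ torsion2) := by
    intro w hw
    rcases ftilde_pm hsemi w with h | h
    · exfalso
      have hww : -w = w := hinj hw.1.2 hw.1.1 h
      exact hw.2 (mem_torsion2.mpr hww.symm)
    · show ftilde (-w) + ftilde w = 0
      rw [h, neg_add_cancel]
  have hcl : t ∈ closure (V \ torsion2) := mem_closure_diff_torsion hVopen htV
  have hcontg : Continuous (fun w : Torus => ftilde (-w) + ftilde w) :=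
    (hcov.continuous.comp continuous_neg).add hcov.continuous
  have h0 : ftilde (-t) + ftilde t = 0 :=
    (hg.closure hcontg continuous_const) hcl
  show ftilde t + ftilde t = 0
  rw [show (-t) = t from (mem_torsion2.mp ht).symm] at h0
  exact h0

lemma injOn_nhd_of_torsion (hcov : IsCoveringMap ftilde)
    (hsemi : ∀ z, piQ (ftilde z) = f (piQ z))
    {t : Torus} (ht : t ∈ torsion2) :
    ∃ U ∈ nhds (piQ t), Set.InjOn f U := by
  obtain ⟨V0, hV0, htV0, hinj0⟩ := exists_injOn_nhd hcov t
  have hTc : IsOpen ((torsion2 \ {t})ᶜ) :=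
    (torsion2_finite.subset Set.diff_subset).isClosed.isOpen_compl
  set V := (V0 ∩ (fun x : Torus => -x) ⁻¹' V0) ∩ (torsion2 \ {t})ᶜ with hVdef
  have hVsub : V ⊆ V0 := fun x hx => hx.1.1
  have hVopen : IsOpen V := (hV0.inter (hV0.preimage continuous_neg)).inter hTc
  have htV : t ∈ V := ⟨⟨htV0, show -t ∈ V0 by rw [← mem_torsion2.mp ht]; exact htV0⟩,
    fun hmem => hmem.2 rfl⟩
  have hVsymm : ∀ x ∈ V, -x ∈ V := by
    intro x hx
    refine ⟨⟨hx.1.2, show - -x ∈ V0 by rw [neg_neg]; exact hx.1.1⟩, ?_⟩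
    intro hmem
    have hxx : -x = x := by
      have h := mem_torsion2.mp hmem.1
      rwa [neg_neg] at h
    exact hx.2 ⟨hxx ▸ hmem.1, hxx ▸ hmem.2⟩
  have hVT : ∀ x ∈ V, x ∈ torsion2 → x = t := by
    intro x hx hxT
    by_contra hxt
    exact hx.2 ⟨hxT, hxt⟩
  refine ⟨piQ '' V, (isOpen_piQ_image hVopen).mem_nhds ⟨t, htV, rfl⟩, ?_⟩
  rintro a ⟨w, hw, rfl⟩ b ⟨w', hw', rfl⟩ hab
  rw [← hsemi, ← hsemi] at hab
  rcases piQ_eq_iff.mp hab with h | h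
  · rw [hinj0 (hVsub hw) (hVsub hw') h]
  · by_cases hw'T : w' ∈ torsion2
    · have hw't : w' = t := hVT w' hw' hw'T
      have hfw'T : ftilde w' ∈ torsion2 := hw't ▸ ftilde_torsion hcov hsemi ht
      rw [← mem_torsion2.mp hfw'T] at h
      rw [hinj0 (hVsub hw) (hVsub hw') h]
    · have hnegw' : -w' ∈ V := hVsymm w' hw'
      have hodd : ftilde (-w') = -ftilde w' := by
        rcases ftilde_pm hsemi w' with h2 | h2
        · exfalso
          have : -w' = w' := hinj0 (hVsub hnegw') (hVsub hw') h2
          exact hw'T (mem_torsion2.mpr this.symm)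
        · exact h2
      rw [← hodd] at h
      have : w = -w' := hinj0 (hVsub hw) (hVsub hnegw') h
      rw [this, piQ_neg]

lemma injOn_nhd_of_generic (hcov : IsCoveringMap ftilde)
    (hsemi : ∀ z, piQ (ftilde z) = f (piQ z))
    {z : Torus} (hfz : ftilde z ∉ torsion2) :
    ∃ U ∈ nhds (piQ z), Set.InjOn f U := by
  obtain ⟨V0, hV0, hzV0, hinj0⟩ := exists_injOn_nhd hcov z
  have hne : ftilde z ≠ -ftilde z := fun h => hfz (mem_torsion2.mpr h)
  obtain ⟨A1, B1, hA1, hB1, hfzA, hfzB, hAB⟩ := t2_separation hne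
  set V := (V0 ∩ ftilde ⁻¹' (A1 ∩ (fun x : Torus => -x) ⁻¹' B1)) with hVdef
  have hVopen : IsOpen V :=
    hV0.inter ((hA1.inter (hB1.preimage continuous_neg)).preimage hcov.continuous)
  have hzV : z ∈ V := ⟨hzV0, hfzA, hfzB⟩
  refine ⟨piQ '' V, (isOpen_piQ_image hVopen).mem_nhds ⟨z, hzV, rfl⟩, ?_⟩
  rintro a ⟨w, hw, rfl⟩ b ⟨w', hw', rfl⟩ hab
  rw [← hsemi, ← hsemi] at hab
  rcases piQ_eq_iff.mp hab with h | h
  · rw [hinj0 hw.1 hw'.1 h]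
  · exfalso
    have h1 : ftilde w ∈ A1 := hw.2.1
    have h2 : ftilde w ∈ B1 := by
      rw [h]
      exact hw'.2.2
    exact Set.disjoint_iff.mp hAB ⟨h1, h2⟩ 

end main

/-- For a Lattès map `f : Q → Q` with lift a covering map
`f̃ : 𝕋² → 𝕋²` all of whose fibers have exactly `d > 1` elements, no critical
point of `f` (a point on no neighborhood of which `f` is injective) is
periodic. -/
theorem lattes_critical_points_not_periodic
    (f : Q → Q) (hf : Continuous f)
    (ftilde : Torus → Torus) (hcov : IsCoveringMap ftilde)
    (d : ℕ) (hd : 1 < d)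
    (hfib : ∀ z : Torus, (ftilde ⁻¹' {z}).ncard = d)
    (hsemi : ∀ z : Torus, piQ (ftilde z) = f (piQ z))
    (q : Q) (hcrit : ∀ U ∈ nhds q, ¬ Set.InjOn f U)
    (n : ℕ) (hn : 1 ≤ n) :
    f^[n] q ≠ q := by
  intro hper
  obtain ⟨z, hzq⟩ := piQ_surj q
  by_cases hzT : z ∈ torsion2
  · obtain ⟨U, hU, hUinj⟩ := injOn_nhd_of_torsion hcov hsemi hzT
    exact hcrit U (hzq ▸ hU) hUinj
  by_cases hfzT : ftilde z ∈ torsion2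
  swap
  · obtain ⟨U, hU, hUinj⟩ := injOn_nhd_of_generic hcov hsemi hfzT
    exact hcrit U (hzq ▸ hU) hUinj
  have hforward : ∀ m, 1 ≤ m → ∃ t ∈ torsion2, f^[m] q = piQ t := by
    intro m hm
    induction m with
    | zero => omega
    | succ k ih =>
      rcases Nat.eq_zero_or_pos k with hk | hk
      · subst hk
        refine ⟨ftilde z, hfzT, ?_⟩
        rw [Function.iterate_one, ← hzq, ← hsemi]
      · obtain ⟨t, htT, hqt⟩ := ih hk
        refine ⟨ftilde t, ftilde_torsion hcov hsemi htT, ?_⟩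
        rw [Function.iterate_succ_apply', hqt, ← hsemi]
  obtain ⟨t, htT, hqt⟩ := hforward n hn
  rw [hper] at hqt
  rcases piQ_eq_iff.mp (hzq.trans hqt) with h | h
  · exact hzT (h ▸ htT)
  · exact hzT (h ▸ neg_mem_torsion2 htT)
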